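/- Let k ≥ 1 and let F be a spanning forest of the complete graph K_k. If F has c connected components and k_1, …, k_c are the numbers of vertices of its components, then the number of spanning trees of K_k containing all edges of F equals k^{c−2} · ∏_{i=1}^c k_i (an identity of rational numbers; the right-hand side is an integer). -/

import Mathlib

open SimpleGraph Finset

variable {V : Type*}

/-- The number of spanning trees of a graph `G`. -/
noncomputable def treeCount (G : SimpleGraph V) : ℕ :=
  Nat.card {H : SimpleGraph V // H ≤ G ∧ H.IsTree}

/-- The number of spanning trees of `G` containing all edges of `H`. -/
noncomputable def treeCountContaining (G H : SimpleGraph V) : ℕ :=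
  Nat.card {T : SimpleGraph V // T ≤ G ∧ H ≤ T ∧ T.IsTree}

/-- The symmetric function `e ↦ 1/d(u_e) + 1/d(v_e)`. -/
noncomputable def invDegSum [Fintype V] (G : SimpleGraph V) [DecidableRel G.Adj] :
    Sym2 V → ℚ :=
  Sym2.lift ⟨fun u v => (G.degree u : ℚ)⁻¹ + (G.degree v : ℚ)⁻¹, fun u v => add_comm _ _⟩

/-- The graph obtained from `G` by replacing each edge of `F` by a path of length `r+1`
joining its two ends (inserting `r` new internal vertices on each such edge).
The internal vertex at distance `i` from `u` on the path replacing the edge `uv`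
is represented by the unordered pair `{(u, i), (v, r+1-i)}`. -/
def SrOn (G : SimpleGraph V) (F : Set (Sym2 V)) (r : ℕ) :
    SimpleGraph (V ⊕ {p : Sym2 (V × ℕ) //
      ∃ u v i, G.Adj u v ∧ s(u, v) ∈ F ∧ 1 ≤ i ∧ i ≤ r ∧ p = s((u, i), (v, r + 1 - i))}) :=
  SimpleGraph.fromRel fun x y =>
    match x, y with
    | Sum.inl u, Sum.inl v => G.Adj u v ∧ (s(u, v) ∉ F ∨ r = 0)
    | Sum.inl u, Sum.inr p => ∃ v, G.Adj u v ∧ s(u, v) ∈ F ∧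
        (p : Sym2 (V × ℕ)) = s((u, 1), (v, r))
    | Sum.inr p, Sum.inr q => ∃ u v i, G.Adj u v ∧ s(u, v) ∈ F ∧ 1 ≤ i ∧ i + 1 ≤ r ∧
        (p : Sym2 (V × ℕ)) = s((u, i), (v, r + 1 - i)) ∧
        (q : Sym2 (V × ℕ)) = s((u, i + 1), (v, r - i))
    | Sum.inr _, Sum.inl _ => False

/-- `S_r(G)`: every edge of `G` is replaced by a path of length `r+1`. -/
def Sr (G : SimpleGraph V) (r : ℕ) := SrOn G Set.univ r

/-- `G_{-E'}`: delete the edges of `E'` and attach a new pendant edge at each end of each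
deleted edge (one new pendant vertex per edge-end incidence). -/
def pendantize (G : SimpleGraph V) (E' : Set (Sym2 V)) :
    SimpleGraph (V ⊕ {p : Sym2 V × V // p.1 ∈ E' ∧ p.2 ∈ p.1}) :=
  SimpleGraph.fromRel fun x y =>
    match x, y with
    | Sum.inl u, Sum.inl v => G.Adj u v ∧ s(u, v) ∉ E'
    | Sum.inl u, Sum.inr p => (p : Sym2 V × V).2 = u
    | _, _ => False

/-- `G_{•e}`: subdivide the edge `xy` once. -/
def subdivideOnce (G : SimpleGraph V) (x y : V) : SimpleGraph (V ⊕ Unit) :=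
  SimpleGraph.fromRel fun a b =>
    match a, b with
    | Sum.inl u, Sum.inl v => G.Adj u v ∧ s(u, v) ≠ s(x, y)
    | Sum.inl u, Sum.inr _ => u = x ∨ u = y
    | _, _ => False

/-- `G_{r•e}`: replace the edge `xy` by a path of length `r+1` (insert `r` new vertices). -/
def subdividePath (G : SimpleGraph V) (x y : V) (r : ℕ) : SimpleGraph (V ⊕ Fin r) :=
  SimpleGraph.fromRel fun a b =>
    match a, b with
    | Sum.inl u, Sum.inl v => G.Adj u v ∧ (s(u, v) ≠ s(x, y) ∨ r = 0)
    | Sum.inl u, Sum.inr i => (u = x ∧ (i : ℕ) = 0) ∨ (u = y ∧ (i : ℕ) = r - 1)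
    | Sum.inr i, Sum.inr j => (j : ℕ) = (i : ℕ) + 1
    | Sum.inr _, Sum.inl _ => False

/-- The clique-inserted graph `C(G)`: its vertices are the darts of `G`; the vertex of the
clique at `u` indexed by an edge `e` incident with `u` is the dart of `e` starting at `u`. -/
def cliqueInserted (G : SimpleGraph V) : SimpleGraph G.Dart where
  Adj d d' := d ≠ d' ∧ (d.toProd.1 = d'.toProd.1 ∨ d.edge = d'.edge)
  symm := ⟨fun d d' h => ⟨h.1.symm, h.2.imp Eq.symm Eq.symm⟩⟩
  loopless := ⟨fun d h => h.1 rfl⟩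

/-- **Lovász.** For any spanning forest `F` of the complete graph `K_k` (`k ≥ 1`) with `c`
connected components of orders `k₁, …, k_c`, the number of spanning trees of `K_k`
containing all edges of `F` equals `k^(c−2) · ∏ᵢ kᵢ` in `ℚ`. -/

lemma reachable_sup_edge {G : SimpleGraph V} {s t : V} {a b : V}
    (h : (G ⊔ edge s t).Reachable a b) :
    G.Reachable a b ∨ (G.Reachable a s ∧ G.Reachable t b) ∨
      (G.Reachable a t ∧ G.Reachable s b) := by
  obtain ⟨w⟩ := h
  induction w with
  | nil => exact Or.inl (Reachable.refl _)
  | @cons x y z hadj p ih =>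
    rw [sup_adj, edge_adj] at hadj
    rcases hadj with h | ⟨(⟨rfl, rfl⟩ | ⟨rfl, rfl⟩), hne⟩
    · have hxy : G.Reachable x y := h.reachable
      rcases ih with h' | ⟨h1, h2⟩ | ⟨h1, h2⟩
      · exact Or.inl (hxy.trans h')
      · exact Or.inr (Or.inl ⟨hxy.trans h1, h2⟩)
      · exact Or.inr (Or.inr ⟨hxy.trans h1, h2⟩)
    · rcases ih with h' | ⟨h1, h2⟩ | ⟨h1, h2⟩
      · exact Or.inr (Or.inl ⟨Reachable.refl _, h'⟩)
      · exact Or.inr (Or.inl ⟨Reachable.refl _, h2⟩)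
      · exact Or.inl h2
    · rcases ih with h' | ⟨h1, h2⟩ | ⟨h1, h2⟩
      · exact Or.inr (Or.inr ⟨Reachable.refl _, h'⟩)
      · exact Or.inl h2
      · exact Or.inr (Or.inr ⟨Reachable.refl _, h2⟩)

lemma reachable_sup_edge_iff {G : SimpleGraph V} {s t : V} (hst : s ≠ t) {a b : V} :
    (G ⊔ edge s t).Reachable a b ↔ G.Reachable a b ∨ (G.Reachable a s ∧ G.Reachable t b) ∨
      (G.Reachable a t ∧ G.Reachable s b) := by
  constructor
  · exact reachable_sup_edge
  · have hadj : (G ⊔ edge s t).Adj s t := by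
      rw [sup_adj, edge_adj]; exact Or.inr ⟨Or.inl ⟨rfl, rfl⟩, hst⟩
    rintro (h | ⟨h1, h2⟩ | ⟨h1, h2⟩)
    · exact h.mono le_sup_left
    · exact ((h1.mono le_sup_left).trans hadj.reachable).trans (h2.mono le_sup_left)
    · exact ((h1.mono le_sup_left).trans hadj.symm.reachable).trans (h2.mono le_sup_left)

section merge
variable {G : SimpleGraph V} {s t : V}

/-- map on components induced by `G ≤ G ⊔ edge s t`. -/
noncomputable def mergeMap (G : SimpleGraph V) (s t : V) :
    G.ConnectedComponent → (G ⊔ edge s t).ConnectedComponent :=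
  SimpleGraph.ConnectedComponent.map (Hom.ofLE le_sup_left)

lemma mergeMap_mk (a : V) :
    mergeMap G s t (G.connectedComponentMk a) = (G ⊔ edge s t).connectedComponentMk a := rfl

lemma mergeMap_eq_iff (hst : s ≠ t) {x y : G.ConnectedComponent} :
    mergeMap G s t x = mergeMap G s t y ↔ x = y ∨
      (x = G.connectedComponentMk s ∧ y = G.connectedComponentMk t) ∨
      (x = G.connectedComponentMk t ∧ y = G.connectedComponentMk s) := by
  refine SimpleGraph.ConnectedComponent.ind₂ (fun a b => ?_) x y
  simp only [mergeMap_mk, ConnectedComponent.eq, reachable_sup_edge_iff hst]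
  constructor
  · rintro (h | ⟨h1, h2⟩ | ⟨h1, h2⟩)
    · exact Or.inl h
    · exact Or.inr (Or.inl ⟨h1, h2.symm⟩)
    · exact Or.inr (Or.inr ⟨h1, h2.symm⟩)
  · rintro (h | ⟨h1, h2⟩ | ⟨h1, h2⟩)
    · exact Or.inl h
    · exact Or.inr (Or.inl ⟨h1, h2.symm⟩)
    · exact Or.inr (Or.inr ⟨h1, h2.symm⟩)

/-- the equivalence between components of `G` other than that of `t`, and components
of `G ⊔ edge s t`, when `s` and `t` are not reachable. -/
noncomputable def mergeEquiv (hr : ¬ G.Reachable s t) :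
    {x : G.ConnectedComponent // x ≠ G.connectedComponentMk t} ≃
      (G ⊔ edge s t).ConnectedComponent := by
  have hst : s ≠ t := fun h => hr (h ▸ Reachable.refl _)
  refine Equiv.ofBijective (fun x => mergeMap G s t x.1) ⟨?_, ?_⟩
  · rintro ⟨x, hx⟩ ⟨y, hy⟩ h
    simp only [mergeMap_eq_iff hst] at h
    rcases h with h | ⟨h1, h2⟩ | ⟨h1, h2⟩
    · exact Subtype.ext h
    · exact absurd h2 hy
    · exact absurd h1 hx
  · intro d
    obtain ⟨a, rfl⟩ := d.exists_rep
    by_cases h : G.connectedComponentMk a = G.connectedComponentMk t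
    · refine ⟨⟨G.connectedComponentMk s, fun hc => hr (ConnectedComponent.eq.mp hc)⟩, ?_⟩
      rw [ConnectedComponent.eq] at h
      exact ConnectedComponent.sound ((reachable_sup_edge_iff hst).2
        (Or.inr (Or.inl ⟨Reachable.refl _, h.symm⟩)))
    · exact ⟨⟨G.connectedComponentMk a, h⟩, rfl⟩

lemma card_cc_sup_edge [Finite V] (hr : ¬ G.Reachable s t) :
    Nat.card (G ⊔ edge s t).ConnectedComponent + 1 = Nat.card G.ConnectedComponent := by
  classical
  cases nonempty_fintype V
  have h1 := Nat.card_congr (mergeEquiv hr)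
  have h2 : Nat.card {x : G.ConnectedComponent // x ≠ G.connectedComponentMk t} + 1 =
      Nat.card G.ConnectedComponent := by
    have := Fintype.ofFinite G.ConnectedComponent
    rw [Nat.card_eq_fintype_card, Nat.card_eq_fintype_card]
    have : Fintype.card {x : G.ConnectedComponent // ¬ x = G.connectedComponentMk t} =
        Fintype.card G.ConnectedComponent -
          Fintype.card {x : G.ConnectedComponent // x = G.connectedComponentMk t} :=
      Fintype.card_subtype_compl _
    rw [Fintype.card_subtype_eq] at this
    have hcongr : Fintype.card {x : G.ConnectedComponent // x ≠ G.connectedComponentMk t} =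
        Fintype.card {x : G.ConnectedComponent // ¬ x = G.connectedComponentMk t} :=
      Fintype.card_congr (Equiv.refl _)
    have hpos : 0 < Fintype.card G.ConnectedComponent :=
      Fintype.card_pos_iff.mpr ⟨G.connectedComponentMk t⟩
    omega
  rw [← h1, h2]

lemma supp_mergeMap_of_ne (hst : s ≠ t) {a : V}
    (hxu : ¬ G.Reachable a s) (hxv : ¬ G.Reachable a t) :
    (mergeMap G s t (G.connectedComponentMk a)).supp = (G.connectedComponentMk a).supp := by
  ext b
  simp only [ConnectedComponent.mem_supp_iff, mergeMap_mk, ConnectedComponent.eq,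
    reachable_sup_edge_iff hst]
  constructor
  · rintro (h | ⟨h1, h2⟩ | ⟨h1, h2⟩)
    · exact h
    · exact absurd h2.symm hxv
    · exact absurd h2.symm hxu
  · exact fun h => Or.inl h

lemma supp_mergeMap_mk_s (hst : s ≠ t) :
    (mergeMap G s t (G.connectedComponentMk s)).supp =
      (G.connectedComponentMk s).supp ∪ (G.connectedComponentMk t).supp := by
  ext b
  simp only [ConnectedComponent.mem_supp_iff, mergeMap_mk, ConnectedComponent.eq,
    reachable_sup_edge_iff hst, Set.mem_union]
  constructor
  · rintro (h | ⟨h1, h2⟩ | ⟨h1, h2⟩)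
    · exact Or.inl h
    · exact Or.inl h1
    · exact Or.inr h1
  · rintro (h | h)
    · exact Or.inl h
    · exact Or.inr (Or.inr ⟨h, Reachable.refl _⟩)

end merge

/-- The product of the component orders. -/
noncomputable def suppProd (G : SimpleGraph V) : ℚ :=
  ∏ᶠ x : G.ConnectedComponent, (Nat.card x.supp : ℚ)

lemma suppProd_sup_edge [Finite V] {G : SimpleGraph V} {s t : V} (hr : ¬ G.Reachable s t) :
    suppProd (G ⊔ edge s t) *
      ((Nat.card (G.connectedComponentMk s).supp : ℚ) *
        (Nat.card (G.connectedComponentMk t).supp : ℚ)) =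
    suppProd G * ((Nat.card (G.connectedComponentMk s).supp : ℚ) +
        (Nat.card (G.connectedComponentMk t).supp : ℚ)) := by
  classical
  cases nonempty_fintype V
  have := Fintype.ofFinite G.ConnectedComponent
  have := Fintype.ofFinite (G ⊔ edge s t).ConnectedComponent
  have hst : s ≠ t := fun h => hr (h ▸ Reachable.refl _)
  set cu := G.connectedComponentMk s with hcu
  set cv := G.connectedComponentMk t with hcv
  have hcucv : cu ≠ cv := fun h => hr (ConnectedComponent.eq.mp h)
  set f : G.ConnectedComponent → ℚ := fun x => (Nat.card x.supp : ℚ) with hf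
  -- union card
  have hunion : (Nat.card ((mergeMap G s t cu).supp) : ℚ) = f cu + f cv := by
    rw [supp_mergeMap_mk_s hst, Nat.card_coe_set_eq,
      Set.ncard_union_eq (G.pairwise_disjoint_supp_connectedComponent hcucv)
        (Set.toFinite _) (Set.toFinite _)]
    push_cast [hf, Nat.card_coe_set_eq]
    ring
  have hLHS : suppProd (G ⊔ edge s t) =
      ∏ x ∈ (Finset.univ.erase cv), (Nat.card ((mergeMap G s t x).supp) : ℚ) := by
    rw [suppProd, finprod_eq_prod_of_fintype, ← Equiv.prod_comp (mergeEquiv hr)]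
    exact (Finset.prod_subtype (Finset.univ.erase cv)
      (fun x => by simp [Finset.mem_erase, hcv])
      (fun x => (Nat.card ((mergeMap G s t x).supp) : ℚ))).symm
  have hcmem : cu ∈ Finset.univ.erase cv := Finset.mem_erase.mpr ⟨hcucv, Finset.mem_univ _⟩
  have hsplit : ∏ x ∈ (Finset.univ.erase cv), (Nat.card ((mergeMap G s t x).supp) : ℚ) =
      (f cu + f cv) * ∏ x ∈ ((Finset.univ.erase cv).erase cu), f x := by
    rw [← Finset.mul_prod_erase _ _ hcmem, hcu, hunion]
    congr 1
    refine Finset.prod_congr rfl (fun x => ConnectedComponent.ind (fun a hx => ?_) x)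
    simp only [Finset.mem_erase] at hx
    have h1 : ¬ G.Reachable a s := fun h => hx.1 (ConnectedComponent.sound h)
    have h2 : ¬ G.Reachable a t := fun h => hx.2.1 (ConnectedComponent.sound h)
    rw [supp_mergeMap_of_ne hst h1 h2]
  have hRHS : suppProd G = f cv * (f cu * ∏ x ∈ ((Finset.univ.erase cv).erase cu), f x) := by
    rw [suppProd, finprod_eq_prod_of_fintype,
      ← Finset.mul_prod_erase _ f (Finset.mem_univ cv),
      ← Finset.mul_prod_erase _ f hcmem]
  rw [hLHS, hsplit, hRHS]
  ring

lemma isAcyclic_mono {H G : SimpleGraph V} (h : H ≤ G) (hG : G.IsAcyclic) : H.IsAcyclic := by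
  intro v c hc
  exact hG _ ((Walk.map_isCycle_iff_of_injective (f := Hom.ofLE h)
    (fun a b hab => hab)).mpr hc)

lemma edge_le_iff' {u v : V} (h : u ≠ v) {T : SimpleGraph V} : edge u v ≤ T ↔ T.Adj u v := by
  constructor
  · intro hle
    exact hle ((edge_adj u v u v).mpr ⟨Or.inl ⟨rfl, rfl⟩, h⟩)
  · intro hadj a b hab
    rw [edge_adj] at hab
    rcases hab with ⟨(⟨rfl, rfl⟩ | ⟨rfl, rfl⟩), _⟩
    · exact hadj
    · exact hadj.symm

lemma adj_of_reachable_of_le {F T : SimpleGraph V} (hFT : F ≤ T) (hT : T.IsAcyclic)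
    {u v : V} (hr : F.Reachable u v) (hadj : T.Adj u v) : F.Adj u v := by
  by_contra hna
  refine hr.symm.elim_path (fun p => ?_)
  have hpath : (Walk.mapLe hFT p.1).IsPath := p.2.mapLe hFT
  have hedge : s(u, v) ∉ (Walk.mapLe hFT p.1).edges := by
    intro hmem
    simp only [Walk.mapLe, Walk.edges_map] at hmem
    obtain ⟨e', he', heq⟩ := List.mem_map.mp hmem
    have : e' = s(u, v) := by simpa using heq
    subst this
    exact hna (p.1.edges_subset_edgeSet he')
  exact hT (Walk.cons hadj (Walk.mapLe hFT p.1))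
    ((Walk.cons_isCycle_iff _ hadj).mpr ⟨hpath, hedge⟩)

lemma card_cc_bot [Finite V] : Nat.card (⊥ : SimpleGraph V).ConnectedComponent = Nat.card V := by
  refine (Nat.card_congr (Equiv.ofBijective
    (fun v => (⊥ : SimpleGraph V).connectedComponentMk v) ⟨?_, ?_⟩)).symm
  · intro a b h
    exact reachable_bot.mp (ConnectedComponent.eq.mp h)
  · exact fun d => d.exists_rep

lemma forest_card [Fintype V] {F : SimpleGraph V} (hF : F.IsAcyclic) :
    F.edgeSet.ncard + Nat.card F.ConnectedComponent = Fintype.card V := by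
  classical
  suffices H : ∀ n (F : SimpleGraph V), F.IsAcyclic → F.edgeSet.ncard = n →
      F.edgeSet.ncard + Nat.card F.ConnectedComponent = Fintype.card V from
    H _ F hF rfl
  intro n
  induction n using Nat.strong_induction_on with
  | _ n ih =>
    intro F hF hn
    rcases Nat.eq_zero_or_pos n with hn0 | hnpos
    · subst hn0
      have hempty : F.edgeSet = ∅ := (Set.ncard_eq_zero (Set.toFinite _)).mp hn
      have hbot : F = ⊥ := edgeSet_eq_empty.mp hempty
      subst hbot
      rw [hn, card_cc_bot, Nat.card_eq_fintype_card, zero_add]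
    · obtain ⟨e, he⟩ : F.edgeSet.Nonempty := by
        rw [Set.nonempty_iff_ne_empty]
        intro h
        rw [h, Set.ncard_empty] at hn
        omega
      induction e using Sym2.ind with
      | _ u v =>
        have huv : F.Adj u v := he
        have hne : u ≠ v := huv.ne
        set F' := F.deleteEdges {s(u, v)} with hF'
        have h1 : F' ≤ F := deleteEdges_le _
        have h2 : F = F' ⊔ edge u v := by
          ext a b
          simp only [sup_adj, hF', deleteEdges_adj, Set.mem_singleton_iff, edge_adj]
          constructor
          · intro hab
            by_cases he : s(a, b) = s(u, v)
            · rw [Sym2.eq_iff] at he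
              exact Or.inr ⟨he, hab.ne⟩
            · exact Or.inl ⟨hab, he⟩
          · rintro (⟨hab, _⟩ | ⟨(⟨rfl, rfl⟩ | ⟨rfl, rfl⟩), _⟩)
            · exact hab
            · exact huv
            · exact huv.symm
        have h3 : ¬ F'.Reachable u v := by
          intro h
          refine h.symm.elim_path (fun p => ?_)
          have hpath : (Walk.mapLe h1 p.1).IsPath := p.2.mapLe h1
          have hedge : s(u, v) ∉ (Walk.mapLe h1 p.1).edges := by
            intro hmem
            simp only [Walk.mapLe, Walk.edges_map] at hmem
            obtain ⟨e', he', heq⟩ := List.mem_map.mp hmem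
            have heq' : e' = s(u, v) := by simpa using heq
            subst heq'
            have := p.1.edges_subset_edgeSet he'
            rw [hF', edgeSet_deleteEdges] at this
            exact this.2 rfl
          exact hF (Walk.cons huv (Walk.mapLe h1 p.1))
            ((Walk.cons_isCycle_iff _ huv).mpr ⟨hpath, hedge⟩)
        have h4 : Nat.card F.ConnectedComponent + 1 = Nat.card F'.ConnectedComponent := by
          rw [h2]; exact card_cc_sup_edge h3
        have h5 : F'.edgeSet.ncard = n - 1 := by
          rw [hF', edgeSet_deleteEdges, Set.ncard_diff_singleton_of_mem he, hn]
        have h6 := ih (n - 1) (by omega) F' (isAcyclic_mono h1 hF) h5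
        rw [h5] at h6
        omega

lemma isAcyclic_sup_edge {F : SimpleGraph V} (hF : F.IsAcyclic) {u v : V}
    (hr : ¬ F.Reachable u v) : (F ⊔ edge u v).IsAcyclic := by
  have hne : u ≠ v := fun h => hr (h ▸ Reachable.refl _)
  intro w c hc
  by_cases he : s(u, v) ∈ c.edges
  · have hadj : (F ⊔ edge u v).Adj u v := by
      rw [sup_adj, edge_adj]; exact Or.inr ⟨Or.inl ⟨rfl, rfl⟩, hne⟩
    have := (adj_and_reachable_delete_edges_iff_exists_cycle.mpr ⟨w, c, hc, he⟩).2
    have hle : (F ⊔ edge u v) \ fromEdgeSet {s(u, v)} ≤ F := by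
      rw [← edgeSet_subset_edgeSet]
      intro e he'
      rw [edgeSet_sdiff, edgeSet_sup, edge_edgeSet_of_ne hne] at he'
      rcases he' with ⟨(h1 | h1), h2⟩
      · exact h1
      · rw [Set.mem_singleton_iff] at h1
        subst h1
        exact absurd (by rw [edgeSet_fromEdgeSet]; exact ⟨rfl, by simp [hne]⟩) h2
    exact hr (this.mono hle)
  · have hsub : ∀ e ∈ c.edges, e ∈ F.edgeSet := by
      intro e he'
      have := c.edges_subset_edgeSet he'
      rw [edgeSet_sup, edge_edgeSet_of_ne hne] at this
      rcases this with h | h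
      · exact h
      · exact absurd (h ▸ he') he
    exact hF _ (hc.transfer hsub)

lemma card_cc_of_connected [Finite V] [Nonempty V] {T : SimpleGraph V} (hT : T.Connected) :
    Nat.card T.ConnectedComponent = 1 :=
  Nat.card_eq_one_iff_unique.mpr
    ⟨hT.preconnected.subsingleton_connectedComponent,
      ⟨T.connectedComponentMk (Classical.arbitrary V)⟩⟩

lemma pair_count [Fintype V] {F T : SimpleGraph V} (hFT : F ≤ T) :
    Nat.card {p : V × V // T.Adj p.1 p.2 ∧ ¬ F.Adj p.1 p.2} + 2 * F.edgeSet.ncard =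
      2 * T.edgeSet.ncard := by
  classical
  -- card of adj pairs
  have key : ∀ (G : SimpleGraph V), (Finset.univ.filter
      (fun p : V × V => G.Adj p.1 p.2)).card = 2 * G.edgeSet.ncard := by
    intro G
    have hd : Fintype.card G.Dart = (Finset.univ.filter
        (fun p : V × V => G.Adj p.1 p.2)).card := by
      rw [← Fintype.card_subtype]
      exact Fintype.card_congr ⟨fun d => ⟨d.toProd, d.adj⟩, fun p => ⟨p.1, p.2⟩,
        fun d => rfl, fun p => rfl⟩
    rw [← hd, dart_card_eq_twice_card_edges, edgeFinset, Set.ncard_eq_toFinset_card']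
  have h1 : Nat.card {p : V × V // T.Adj p.1 p.2 ∧ ¬ F.Adj p.1 p.2} =
      ((Finset.univ.filter (fun p : V × V => T.Adj p.1 p.2)) \
        (Finset.univ.filter (fun p : V × V => F.Adj p.1 p.2))).card := by
    rw [Nat.card_eq_fintype_card, Fintype.card_subtype]
    congr 1
    ext p
    simp only [Finset.mem_filter, Finset.mem_sdiff, Finset.mem_univ, true_and]
  have hsub : (Finset.univ.filter (fun p : V × V => F.Adj p.1 p.2)) ⊆
      (Finset.univ.filter (fun p : V × V => T.Adj p.1 p.2)) := by
    intro p hp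
    simp only [Finset.mem_filter, Finset.mem_univ, true_and] at hp ⊢
    exact hFT hp
  rw [h1, Finset.card_sdiff_of_subset hsub, key, key]
  have := Finset.card_le_card hsub
  rw [key, key] at this
  omega

lemma supp_card_pos [Finite V] {F : SimpleGraph V} (x : F.ConnectedComponent) :
    0 < Nat.card x.supp := by
  refine ConnectedComponent.ind (fun a => ?_) x
  have : Nonempty ((F.connectedComponentMk a).supp) := ⟨⟨a, rfl⟩⟩
  exact Nat.card_pos

lemma sum_inv_supp [Fintype V] (F : SimpleGraph V) :
    ∑ u : V, ((Nat.card (F.connectedComponentMk u).supp : ℚ))⁻¹ =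
      (Nat.card F.ConnectedComponent : ℚ) := by
  classical
  have := Fintype.ofFinite F.ConnectedComponent
  have hsurj : Function.Surjective F.connectedComponentMk := fun d => d.exists_rep
  rw [Finset.sum_comp (fun x : F.ConnectedComponent => ((Nat.card x.supp : ℚ))⁻¹)
    F.connectedComponentMk, Finset.image_univ_of_surjective hsurj]
  have key : ∀ x : F.ConnectedComponent,
      (Finset.univ.filter (fun u => F.connectedComponentMk u = x)).card •
        ((Nat.card x.supp : ℚ))⁻¹ = 1 := by
    intro x
    have hc : (Finset.univ.filter (fun u => F.connectedComponentMk u = x)).card =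
        Nat.card x.supp := by
      rw [Nat.card_coe_set_eq, show x.supp = {u | F.connectedComponentMk u = x} from rfl,
        Set.ncard_eq_toFinset_card', Set.toFinset_setOf]
    rw [hc, nsmul_eq_mul]
    exact mul_inv_cancel₀ (by exact_mod_cast (supp_card_pos x).ne')
  rw [Finset.sum_congr rfl (fun x _ => key x), Finset.sum_const, Finset.card_univ,
    Nat.card_eq_fintype_card, nsmul_eq_mul, mul_one]

lemma sum_pair_weights [Fintype V] (F : SimpleGraph V) [DecidableRel F.Reachable] :
    ∑ p : V × V, (if F.Reachable p.1 p.2 then (0 : ℚ) else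
      ((Nat.card (F.connectedComponentMk p.1).supp : ℚ))⁻¹ +
      ((Nat.card (F.connectedComponentMk p.2).supp : ℚ))⁻¹) =
    2 * (Fintype.card V : ℚ) * ((Nat.card F.ConnectedComponent : ℚ) - 1) := by
  classical
  set A : V → ℚ := fun u => ((Nat.card (F.connectedComponentMk u).supp : ℚ)) with hA
  have hA0 : ∀ u, A u ≠ 0 := fun u =>
    Nat.cast_ne_zero.mpr (supp_card_pos (F.connectedComponentMk u)).ne'
  have hsplit : ∀ p : V × V, (if F.Reachable p.1 p.2 then (0 : ℚ) else (A p.1)⁻¹ + (A p.2)⁻¹)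
      = (if F.Reachable p.1 p.2 then (0 : ℚ) else (A p.1)⁻¹)
        + (if F.Reachable p.1 p.2 then (0 : ℚ) else (A p.2)⁻¹) := by
    intro p; split <;> ring
  rw [Finset.sum_congr rfl (fun p _ => hsplit p), Finset.sum_add_distrib]
  have hswap : ∑ p : V × V, (if F.Reachable p.1 p.2 then (0 : ℚ) else (A p.2)⁻¹)
      = ∑ p : V × V, (if F.Reachable p.1 p.2 then (0 : ℚ) else (A p.1)⁻¹) := by
    rw [Fintype.sum_prod_type, Finset.sum_comm, Fintype.sum_prod_type]
    refine Finset.sum_congr rfl (fun u _ => Finset.sum_congr rfl (fun v _ => ?_))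
    simp only [reachable_comm (u := v) (v := u)]
  rw [hswap]
  have hfilter : ∀ u : V, ((Finset.univ.filter (fun v => F.Reachable u v)).card : ℚ) = A u := by
    intro u
    have hpred : (fun v => F.Reachable u v) =
        (fun v => F.connectedComponentMk v = F.connectedComponentMk u) :=
      funext fun v => propext ⟨fun h => ConnectedComponent.sound h.symm,
        fun h => (ConnectedComponent.eq.mp h).symm⟩
    have heq : Finset.univ.filter (fun v => F.Reachable u v) =
        Finset.univ.filter (fun v => F.connectedComponentMk v = F.connectedComponentMk u) :=
      Finset.filter_congr (fun v _ => ⟨fun h => ConnectedComponent.sound h.symm,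
        fun h => (ConnectedComponent.eq.mp h).symm⟩)
    rw [heq]
    have hcard : Nat.card ((F.connectedComponentMk u).supp) =
        #(filter (fun v => F.connectedComponentMk v = F.connectedComponentMk u) univ) := by
      rw [Nat.card_coe_set_eq, show (F.connectedComponentMk u).supp =
          {v | F.connectedComponentMk v = F.connectedComponentMk u} from rfl,
        Set.ncard_eq_toFinset_card', Set.toFinset_setOf]
    simp only [hA, hcard]
  have hAle : ∀ u : V, A u ≤ (Fintype.card V : ℚ) := by
    intro u
    rw [← hfilter u]
    exact_mod_cast Finset.card_le_card (Finset.subset_univ _) |>.trans_eq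
      (Finset.card_univ)
  have hrow : ∀ u : V, ∑ v : V, (if F.Reachable u v then (0 : ℚ) else (A u)⁻¹)
      = (A u)⁻¹ * ((Fintype.card V : ℚ) - A u) := by
    intro u
    rw [Finset.sum_ite, Finset.sum_const_zero, Finset.sum_const, zero_add, nsmul_eq_mul,
      Finset.filter_not]
    rw [Finset.card_sdiff_of_subset (Finset.filter_subset _ _)]
    have h1 : (Finset.univ.filter (fun v => F.Reachable u v)).card ≤ Fintype.card V := by
      rw [← Finset.card_univ]; exact Finset.card_le_card (Finset.filter_subset _ _)
    rw [Finset.card_univ, Nat.cast_sub h1, hfilter u]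
    ring
  rw [Fintype.sum_prod_type]
  have : ∀ u : V, ∑ v : V, (if F.Reachable u v then (0 : ℚ) else (A u)⁻¹)
      = (Fintype.card V : ℚ) * (A u)⁻¹ - 1 := by
    intro u
    rw [hrow u]
    field_simp
    rw [sub_div, div_self (hA0 u)]
  rw [Finset.sum_congr rfl (fun u _ => this u), Finset.sum_sub_distrib, Finset.sum_const,
    Finset.card_univ, ← Finset.mul_sum, sum_inv_supp F, nsmul_eq_mul, mul_one]
  ring

theorem main_count [Fintype V] [Nonempty V] (c : ℕ) :
    ∀ F : SimpleGraph V, F.IsAcyclic → Nat.card F.ConnectedComponent = c + 1 →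
    (Nat.card {T : SimpleGraph V // F ≤ T ∧ T.IsTree} : ℚ) =
      (Fintype.card V : ℚ) ^ ((c : ℤ) + 1 - 2) * suppProd F := by
  have hk0 : (Fintype.card V : ℚ) ≠ 0 := by
    exact_mod_cast Fintype.card_ne_zero
  induction c with
  | zero =>
    intro F hF hc
    classical
    have hsub : Subsingleton F.ConnectedComponent := (Nat.card_eq_one_iff_unique.mp hc).1
    have hconn : F.Connected := by
      rw [connected_iff]
      exact ⟨fun u v => ConnectedComponent.eq.mp (Subsingleton.elim _ _), inferInstance⟩
    have htree : F.IsTree := ⟨hconn, hF⟩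
    have huniq : ∀ T : SimpleGraph V, F ≤ T → T.IsTree → T = F := by
      intro T hle hT
      haveI := Fintype.ofFinite ↑T.edgeSet
      haveI := Fintype.ofFinite ↑F.edgeSet
      have h1 := hT.card_edgeFinset
      have h2 := htree.card_edgeFinset
      have hsubE : F.edgeFinset ⊆ T.edgeFinset := edgeFinset_subset_edgeFinset.mpr hle
      have : T.edgeFinset = F.edgeFinset :=
        (Finset.eq_of_subset_of_card_le hsubE (by omega)).symm
      exact edgeFinset_inj.mp this
    have hcard1 : Nat.card {T : SimpleGraph V // F ≤ T ∧ T.IsTree} = 1 := by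
      rw [Nat.card_eq_one_iff_unique]
      constructor
      · constructor
        intro a b
        exact Subtype.ext ((huniq a.1 a.2.1 a.2.2).trans (huniq b.1 b.2.1 b.2.2).symm)
      · exact ⟨⟨F, le_refl F, htree⟩⟩
    rw [hcard1]
    haveI : Unique F.ConnectedComponent := @Unique.mk' _ ⟨F.connectedComponentMk
      (Classical.arbitrary V)⟩ hsub
    have hsupp : (default : F.ConnectedComponent).supp = Set.univ :=
      Set.eq_univ_of_forall (fun v => Subsingleton.elim _ _)
    have hprod : suppProd F = (Fintype.card V : ℚ) := by
      rw [suppProd, finprod_unique, hsupp]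
      rw [Nat.card_coe_set_eq, Set.ncard_univ, Nat.card_eq_fintype_card]
    rw [hprod]
    push_cast
    rw [zpow_neg_one, inv_mul_cancel₀ hk0]
  | succ c ih =>
    intro F hF hc
    classical
    set kq : ℚ := (Fintype.card V : ℚ) with hkq
    set A : V → ℚ := fun u => ((Nat.card (F.connectedComponentMk u).supp : ℚ)) with hA
    have hA0 : ∀ u, A u ≠ 0 := fun u =>
      Nat.cast_ne_zero.mpr (supp_card_pos (F.connectedComponentMk u)).ne'
    -- edge counts
    have hFedges : F.edgeSet.ncard + (c + 2) = Fintype.card V := by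
      have := forest_card hF
      omega
    have hTedges : ∀ T : SimpleGraph V, T.IsTree → T.edgeSet.ncard + 1 = Fintype.card V := by
      intro T hT
      have h1 := forest_card hT.2
      have h2 := card_cc_of_connected hT.isConnected
      omega
    -- fiber over a tree
    have fiber1 : ∀ T : SimpleGraph V, F ≤ T → T.IsTree →
        Nat.card {p : V × V // T.Adj p.1 p.2 ∧ ¬ F.Adj p.1 p.2} = 2 * (c + 1) := by
      intro T hle hT
      have := pair_count hle
      have h1 := hTedges T hT
      omega
    -- the two sigma types
    have hsigma : Nat.card ((T : {T : SimpleGraph V // F ≤ T ∧ T.IsTree}) ×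
          {p : V × V // T.1.Adj p.1 p.2 ∧ ¬ F.Adj p.1 p.2}) =
        Nat.card ((p : V × V) ×
          {T : SimpleGraph V // F ≤ T ∧ T.IsTree ∧ T.Adj p.1 p.2 ∧ ¬ F.Adj p.1 p.2}) := by
      refine Nat.card_congr ⟨fun x => ⟨x.2.1, ⟨x.1.1, x.1.2.1, x.1.2.2, x.2.2.1, x.2.2.2⟩⟩,
        fun y => ⟨⟨y.2.1, y.2.2.1, y.2.2.2.1⟩, ⟨y.1, y.2.2.2.2.1, y.2.2.2.2.2⟩⟩,
        fun x => rfl, fun y => rfl⟩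
    -- LHS of double counting
    have hLHS : Nat.card ((T : {T : SimpleGraph V // F ≤ T ∧ T.IsTree}) ×
          {p : V × V // T.1.Adj p.1 p.2 ∧ ¬ F.Adj p.1 p.2}) =
        Nat.card {T : SimpleGraph V // F ≤ T ∧ T.IsTree} * (2 * (c + 1)) := by
      haveI := Fintype.ofFinite {T : SimpleGraph V // F ≤ T ∧ T.IsTree}
      haveI : ∀ T : {T : SimpleGraph V // F ≤ T ∧ T.IsTree},
          Fintype {p : V × V // T.1.Adj p.1 p.2 ∧ ¬ F.Adj p.1 p.2} :=
        fun T => Fintype.ofFinite _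
      rw [Nat.card_eq_fintype_card, Fintype.card_sigma]
      have : ∀ T : {T : SimpleGraph V // F ≤ T ∧ T.IsTree},
          Fintype.card {p : V × V // T.1.Adj p.1 p.2 ∧ ¬ F.Adj p.1 p.2} = 2 * (c + 1) := by
        intro T
        rw [← Nat.card_eq_fintype_card]
        exact fiber1 T.1 T.2.1 T.2.2
      rw [Finset.sum_congr rfl (fun T _ => this T), Finset.sum_const, Finset.card_univ,
        smul_eq_mul, Nat.card_eq_fintype_card]
    -- RHS of double counting
    have hRHS : (Nat.card ((p : V × V) ×
          {T : SimpleGraph V // F ≤ T ∧ T.IsTree ∧ T.Adj p.1 p.2 ∧ ¬ F.Adj p.1 p.2}) : ℚ) =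
        kq ^ ((c : ℤ) - 1) * suppProd F *
          ∑ p : V × V, (if F.Reachable p.1 p.2 then (0 : ℚ) else (A p.1)⁻¹ + (A p.2)⁻¹) := by
      haveI : ∀ p : V × V,
          Fintype {T : SimpleGraph V // F ≤ T ∧ T.IsTree ∧ T.Adj p.1 p.2 ∧ ¬ F.Adj p.1 p.2} :=
        fun p => Fintype.ofFinite _
      rw [Nat.card_eq_fintype_card, Fintype.card_sigma]
      push_cast
      rw [Finset.mul_sum]
      refine Finset.sum_congr rfl (fun p _ => ?_)
      rw [← Nat.card_eq_fintype_card]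
      by_cases hr : F.Reachable p.1 p.2
      · -- empty
        have hempty : IsEmpty
            {T : SimpleGraph V // F ≤ T ∧ T.IsTree ∧ T.Adj p.1 p.2 ∧ ¬ F.Adj p.1 p.2} := by
          constructor
          rintro ⟨T, hle, hT, hadj, hna⟩
          exact hna (adj_of_reachable_of_le hle hT.2 hr hadj)
        rw [Nat.card_of_isEmpty, if_pos hr]
        push_cast
        ring
      · have hne : p.1 ≠ p.2 := fun h => hr (h ▸ Reachable.refl _)
        have hna : ¬ F.Adj p.1 p.2 := fun h => hr h.reachable
        have hiff : ∀ T : SimpleGraph V,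
            (F ≤ T ∧ T.IsTree ∧ T.Adj p.1 p.2 ∧ ¬ F.Adj p.1 p.2) ↔
            (F ⊔ edge p.1 p.2 ≤ T ∧ T.IsTree) := by
          intro T
          constructor
          · rintro ⟨h1, h2, h3, _⟩
            exact ⟨sup_le h1 ((edge_le_iff' hne).mpr h3), h2⟩
          · rintro ⟨h1, h2⟩
            exact ⟨le_sup_left.trans h1, h2,
              (edge_le_iff' hne).mp (le_sup_right.trans h1), hna⟩
        rw [Nat.card_congr (Equiv.subtypeEquivRight hiff)]
        have hacyc : (F ⊔ edge p.1 p.2).IsAcyclic := isAcyclic_sup_edge hF hr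
        have hcc : Nat.card (F ⊔ edge p.1 p.2).ConnectedComponent = c + 1 := by
          have := card_cc_sup_edge hr
          omega
        rw [ih (F ⊔ edge p.1 p.2) hacyc hcc, if_neg hr]
        have hmerge := suppProd_sup_edge hr
        have hprod : suppProd (F ⊔ edge p.1 p.2) =
            suppProd F * ((A p.1)⁻¹ + (A p.2)⁻¹) := by
          field_simp [hA0 p.1, hA0 p.2]
          linear_combination hmerge
        rw [hprod]
        rw [show ((c : ℤ) + 1 - 2) = (c : ℤ) - 1 by ring]
        ring
    -- assemble everything
    have hsum : ∑ p : V × V, (if F.Reachable p.1 p.2 then (0 : ℚ) else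
          (A p.1)⁻¹ + (A p.2)⁻¹) =
        2 * kq * ((Nat.card F.ConnectedComponent : ℚ) - 1) := sum_pair_weights F
    rw [hc] at hsum
    have hq1 : (Nat.card {T : SimpleGraph V // F ≤ T ∧ T.IsTree} : ℚ) * (2 * ((c : ℚ) + 1)) =
        kq ^ ((c : ℤ) - 1) * suppProd F *
          ∑ p : V × V, (if F.Reachable p.1 p.2 then (0 : ℚ) else (A p.1)⁻¹ + (A p.2)⁻¹) := by
      rw [← hRHS, ← hsigma, hLHS]
      push_cast
      ring
    rw [hsum] at hq1
    have h2c : (2 : ℚ) * ((c : ℚ) + 1) ≠ 0 := by positivity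
    apply mul_right_cancel₀ h2c
    rw [hq1]
    rw [show (((c + 1 : ℕ) : ℤ) + 1 - 2) = (c : ℤ) - 1 + 1 by push_cast; ring,
      zpow_add_one₀ hk0]
    push_cast
    ring

theorem stmt9 (k : ℕ) (hk : 1 ≤ k) (F : SimpleGraph (Fin k)) (hF : F.IsAcyclic) :
    (treeCountContaining (⊤ : SimpleGraph (Fin k)) F : ℚ) =
      (k : ℚ) ^ ((Nat.card F.ConnectedComponent : ℤ) - 2) *
        ∏ᶠ c : F.ConnectedComponent, (Nat.card c.supp : ℚ) := by
  haveI : Nonempty (Fin k) := ⟨⟨0, hk⟩⟩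
  have h1 : treeCountContaining (⊤ : SimpleGraph (Fin k)) F =
      Nat.card {T : SimpleGraph (Fin k) // F ≤ T ∧ T.IsTree} :=
    Nat.card_congr (Equiv.subtypeEquivRight (fun T => by simp))
  have hpos : 0 < Nat.card F.ConnectedComponent := by
    haveI : Nonempty F.ConnectedComponent := ⟨F.connectedComponentMk (Classical.arbitrary _)⟩
    exact Nat.card_pos
  have hc : Nat.card F.ConnectedComponent = (Nat.card F.ConnectedComponent - 1) + 1 := by omega
  have h2 := main_count (Nat.card F.ConnectedComponent - 1) F hF hc
  rw [h1, h2, Fintype.card_fin]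
  have : (((Nat.card F.ConnectedComponent - 1 : ℕ) : ℤ) + 1 - 2) =
      ((Nat.card F.ConnectedComponent : ℤ) - 2) := by
    rw [Nat.cast_sub hpos]
    push_cast
    ring
  rw [this]
  rfl
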